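/- For all integers M, S, a with M + S ≥ 0, one has Σ_{k ∈ ℤ} q^{k² + a·k} [M, a+k]⁺_q [S, k]⁺_q = [M+S, S+a]_q, where the sum has only finitely many nonzero terms and the right-hand side is the usual Gaussian binomial coefficient. -/

import Mathlib

noncomputable section
open LaurentPolynomial

def gaussRec (v : LaurentPolynomial ℤ) : ℕ → ℕ → LaurentPolynomial ℤ
  | 0, 0 => 1
  | 0, _ + 1 => 0
  | _ + 1, 0 => 1
  | n + 1, m + 1 => gaussRec v n (m + 1) * v ^ (m + 1) + gaussRec v n m

/-- `[n m]_v` for integer indices: the Gaussian binomial in the variable `v`,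
zero unless `0 ≤ m ≤ n`. -/
def gaussZ (v : LaurentPolynomial ℤ) (n m : ℤ) : LaurentPolynomial ℤ :=
  if 0 ≤ m ∧ m ≤ n then gaussRec v n.toNat m.toNat else 0

/-- The Gaussian binomial coefficient `[n m]_q` as a Laurent polynomial in `q = T 1`. -/
def qbin (n m : ℤ) : LaurentPolynomial ℤ := gaussZ (T 1) n m

/-- The extended q-binomial coefficient `[n m]⁺_q ∈ ℤ[q,q⁻¹]`. -/
def qbinPlus (n m : ℤ) : LaurentPolynomial ℤ :=
  if 0 ≤ n then qbin n m
  else (-1) ^ (n - m).natAbs * T (-(((n - m) ^ 2 + (n - m)) / 2)) *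
    gaussZ (T (-1)) (-m - 1) (-n - 1)


lemma gaussRec_succ (v : LaurentPolynomial ℤ) (n m : ℕ) :
    gaussRec v (n+1) (m+1) = gaussRec v n (m+1) * v ^ (m+1) + gaussRec v n m := by
  rw [gaussRec]

lemma gaussRec_zero_right (v : LaurentPolynomial ℤ) : ∀ n, gaussRec v n 0 = 1
  | 0 => rfl
  | _ + 1 => rfl

lemma gaussRec_eq_zero (v : LaurentPolynomial ℤ) : ∀ n m, n < m → gaussRec v n m = 0
  | 0, _ + 1, _ => rfl
  | n + 1, m + 1, h => by
      rw [gaussRec_succ, gaussRec_eq_zero v n (m+1) (by omega),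
        gaussRec_eq_zero v n m (by omega)]
      ring

lemma gaussZ_eq (v : LaurentPolynomial ℤ) {n m : ℤ} (hm : 0 ≤ m) (hn : 0 ≤ n) :
    gaussZ v n m = gaussRec v n.toNat m.toNat := by
  unfold gaussZ
  split
  · rfl
  · exact (gaussRec_eq_zero v _ _ (by omega)).symm

lemma e_succ (d : ℤ) : (d^2 + d)/2 = ((d-1)^2 + (d-1))/2 + d := by
  obtain ⟨x, hx⟩ : Even (d^2 + d) := by
    have h := Int.even_mul_succ_self d
    have : d * (d + 1) = d^2 + d := by ring
    rwa [this] at h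
  obtain ⟨y, hy⟩ : Even ((d-1)^2 + (d-1)) := by
    have h := Int.even_mul_succ_self (d-1)
    have : (d-1) * ((d-1) + 1) = (d-1)^2 + (d-1) := by ring
    rwa [this] at h
  have hd : (d-1)^2 + (d-1) = d^2 + d - 2*d := by ring
  rw [hd] at hy
  have hxy : x = y + d := by linarith
  rw [hx, hd, hy]
  omega

lemma neg_one_pow_pred (d : ℤ) :
    ((-1 : LaurentPolynomial ℤ)) ^ ((d-1).natAbs) = -(-1) ^ (d.natAbs) := by
  rcases Int.even_or_odd d with he | ho
  · have h1 : Odd (d - 1) := Even.sub_odd he odd_one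
    have h2 : Odd (d-1).natAbs := Int.natAbs_odd.2 h1
    have h3 : Even d.natAbs := Int.natAbs_even.2 he
    rw [Odd.neg_one_pow h2, Even.neg_one_pow h3]
  · have h1 : Even (d - 1) := Odd.sub_odd ho odd_one
    have h2 : Even (d-1).natAbs := Int.natAbs_even.2 h1
    have h3 : Odd d.natAbs := Int.natAbs_odd.2 ho
    rw [Odd.neg_one_pow h3, Even.neg_one_pow h2]
    ring


lemma qbinPlus_pascal (n m : ℤ) :
    qbinPlus n m = T m * qbinPlus (n-1) m + qbinPlus (n-1) (m-1) := by
  rcases le_or_gt 1 n with hn | hn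
  · -- positive case: everything is qbin
    simp only [qbinPlus, if_pos (show (0:ℤ) ≤ n by omega),
      if_pos (show (0:ℤ) ≤ n - 1 by omega)]
    unfold qbin
    by_cases hm0 : m < 0
    · simp only [gaussZ]
      rw [if_neg (by omega), if_neg (by omega), if_neg (by omega)]
      ring
    by_cases hm1 : m = 0
    · subst hm1
      rw [gaussZ_eq (T 1) le_rfl (by omega), gaussZ_eq (T 1) le_rfl (by omega)]
      simp only [Int.toNat_zero, gaussRec_zero_right]
      rw [show (0:ℤ) - 1 = -1 from by norm_num]
      simp only [gaussZ]
      rw [if_neg (by omega)]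
      simp [T_zero]
    · by_cases hmn : n < m
      · simp only [gaussZ]
        rw [if_neg (by omega), if_neg (by omega), if_neg (by omega)]
        ring
      · rw [gaussZ_eq (T 1) (show (0:ℤ) ≤ m by omega) (show (0:ℤ) ≤ n by omega),
          gaussZ_eq (T 1) (show (0:ℤ) ≤ m by omega) (show (0:ℤ) ≤ n - 1 by omega),
          gaussZ_eq (T 1) (show (0:ℤ) ≤ m - 1 by omega) (show (0:ℤ) ≤ n - 1 by omega)]
        obtain ⟨nn, hnn⟩ : ∃ nn, n.toNat = nn + 1 := ⟨n.toNat - 1, by omega⟩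
        obtain ⟨mm, hmm⟩ : ∃ mm, m.toNat = mm + 1 := ⟨m.toNat - 1, by omega⟩
        have h1 : (n-1).toNat = nn := by omega
        have h2 : (m-1).toNat = mm := by omega
        rw [hnn, hmm, h1, h2, gaussRec_succ]
        have hv : (T 1 : LaurentPolynomial ℤ) ^ (mm+1) = T m := by
          rw [T_pow]
          congr 1
          push_cast
          omega
        rw [hv]
        ring
  · rcases eq_or_lt_of_le (show n ≤ 0 by omega) with hn0 | hn0
    · -- n = 0
      subst hn0
      rw [show (0:ℤ) - 1 = -1 from by norm_num]
      simp only [qbinPlus, if_pos (le_refl (0:ℤ)),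
        if_neg (show ¬(0:ℤ) ≤ -1 by norm_num)]
      rw [show (-(-1:ℤ) - 1) = 0 from by norm_num,
        show (-(m-1) - 1 : ℤ) = -m from by ring,
        show ((-1:ℤ) - (m-1)) = -m from by ring,
        show ((-1:ℤ) - m) = -m - 1 from by ring]
      unfold qbin
      by_cases hm0 : 1 ≤ m
      · simp only [gaussZ]
        rw [if_neg (by omega), if_neg (by omega), if_neg (by omega)]
        ring
      by_cases hm1 : m = 0
      · subst hm1
        norm_num [gaussZ, gaussRec]
      · -- m ≤ -1
        rw [gaussZ_eq (T (-1)) le_rfl (show (0:ℤ) ≤ -m - 1 by omega),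
          gaussZ_eq (T (-1)) le_rfl (show (0:ℤ) ≤ -m by omega)]
        simp only [Int.toNat_zero, gaussRec_zero_right, mul_one]
        simp only [gaussZ]
        rw [if_neg (by omega)]
        rw [neg_one_pow_pred (-m)]
        have hT : T m * T (-(((-m - 1)^2 + (-m - 1))/2)) =
            (T (-(((-m)^2 + (-m))/2)) : LaurentPolynomial ℤ) := by
          rw [← T_add]; congr 1; linarith [e_succ (-m)]
        linear_combination ((-1 : LaurentPolynomial ℤ) ^ ((-m).natAbs)) * hT
    · -- n ≤ -1
      simp only [qbinPlus, if_neg (show ¬(0:ℤ) ≤ n by omega),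
        if_neg (show ¬(0:ℤ) ≤ n - 1 by omega)]
      rw [show (-(m-1) - 1 : ℤ) = -m from by ring,
        show (-(n-1) - 1 : ℤ) = -n from by ring,
        show (n - 1 - (m-1) : ℤ) = n - m from by ring,
        show (n - 1 - m : ℤ) = n - m - 1 from by ring]
      by_cases hmn : m ≤ n
      · rw [gaussZ_eq (T (-1)) (show (0:ℤ) ≤ -n - 1 by omega) (show (0:ℤ) ≤ -m - 1 by omega),
          gaussZ_eq (T (-1)) (show (0:ℤ) ≤ -n by omega) (show (0:ℤ) ≤ -m - 1 by omega),
          gaussZ_eq (T (-1)) (show (0:ℤ) ≤ -n by omega) (show (0:ℤ) ≤ -m by omega)]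
        obtain ⟨p, hp⟩ : ∃ p, (-m - 1).toNat = p := ⟨_, rfl⟩
        obtain ⟨r, hr⟩ : ∃ r, (-n - 1).toNat = r := ⟨_, rfl⟩
        have hp1 : (-m).toNat = p + 1 := by omega
        have hr1 : (-n).toNat = r + 1 := by omega
        rw [hp, hr, hp1, hr1, gaussRec_succ]
        have hv : (T (-1) : LaurentPolynomial ℤ) ^ (r+1) = T n := by
          rw [T_pow]
          congr 1
          have : (r : ℤ) = -n - 1 := by omega
          push_cast
          omega
        rw [hv, neg_one_pow_pred (n - m)]
        have hT : T m * T (-(((n - m - 1)^2 + (n - m - 1))/2)) =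
            (T (-(((n - m)^2 + (n - m))/2)) : LaurentPolynomial ℤ) * T n := by
          rw [← T_add, ← T_add]; congr 1; linarith [e_succ (n - m)]
        linear_combination ((-1 : LaurentPolynomial ℤ) ^ ((n - m).natAbs) *
          gaussRec (T (-1)) p (r + 1)) * hT
      · simp only [gaussZ]
        rw [if_neg (by omega), if_neg (by omega), if_neg (by omega)]
        ring

lemma qbinPlus_bdd {n m : ℤ} (hn : 0 ≤ n) (h : qbinPlus n m ≠ 0) : 0 ≤ m ∧ m ≤ n := by
  by_contra hc
  apply h
  simp only [qbinPlus, if_pos hn, qbin, gaussZ]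
  rw [if_neg hc]

lemma fin_of_bdd (f : ℤ → LaurentPolynomial ℤ) (lo hi : ℤ)
    (h : ∀ k, f k ≠ 0 → lo ≤ k ∧ k ≤ hi) : (Function.support f).Finite :=
  (Set.finite_Icc lo hi).subset fun k hk => Set.mem_Icc.2 (h k hk)

lemma fin3 (M S b c : ℤ) (t : ℤ → LaurentPolynomial ℤ) (h : 0 ≤ M ∨ 0 ≤ S) :
    (Function.support fun k : ℤ => t k * qbinPlus M (b + k) * qbinPlus S (c + k)).Finite := by
  rcases h with hM | hS
  · refine fin_of_bdd _ (-b) (M - b) fun k hk => ?_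
    have h1 : qbinPlus M (b + k) ≠ 0 := right_ne_zero_of_mul (left_ne_zero_of_mul hk)
    have := qbinPlus_bdd hM h1
    omega
  · refine fin_of_bdd _ (-c) (S - c) fun k hk => ?_
    have h2 : qbinPlus S (c + k) ≠ 0 := right_ne_zero_of_mul hk
    have := qbinPlus_bdd hS h2
    omega

lemma shift (M S a : ℤ) (h : 0 ≤ S ∨ 1 ≤ M) :
    (∑ᶠ k : ℤ, T (k ^ 2 + a * k) * qbinPlus M (a + k) * qbinPlus S k) =
    ∑ᶠ k : ℤ, T (k ^ 2 + (a-1) * k) * qbinPlus (M-1) ((a-1) + k) * qbinPlus (S+1) k := by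
  have hMS : 0 ≤ M - 1 ∨ 0 ≤ S := by omega
  have fG1 : (Function.support fun k : ℤ =>
      T (k^2 + (a+1)*k + a) * qbinPlus (M-1) (a + k) * qbinPlus S k).Finite := by
    simpa using fin3 (M-1) S a 0 (fun k => T (k^2 + (a+1)*k + a)) hMS
  have fG2 : (Function.support fun k : ℤ =>
      T (k^2 + a*k) * qbinPlus (M-1) ((a-1) + k) * qbinPlus S k).Finite := by
    simpa using fin3 (M-1) S (a-1) 0 (fun k => T (k^2 + a*k)) hMS
  have fH2 : (Function.support fun k : ℤ =>
      T (k^2 + (a-1)*k) * qbinPlus (M-1) ((a-1) + k) * qbinPlus S (-1 + k)).Finite :=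
    fin3 (M-1) S (a-1) (-1) (fun k => T (k^2 + (a-1)*k)) hMS
  have hG1H2 : (∑ᶠ k : ℤ, T (k^2 + (a+1)*k + a) * qbinPlus (M-1) (a + k) * qbinPlus S k)
      = ∑ᶠ k : ℤ, T (k^2 + (a-1)*k) * qbinPlus (M-1) ((a-1) + k) * qbinPlus S (-1 + k) := by
    have key : ∀ k : ℤ,
        T ((k+1)^2 + (a-1)*(k+1)) * qbinPlus (M-1) ((a-1) + (k+1)) * qbinPlus S (-1 + (k+1))
        = T (k^2 + (a+1)*k + a) * qbinPlus (M-1) (a + k) * qbinPlus S k := fun k => by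
      rw [show (a-1) + (k+1) = a + k from by ring, show (-1) + (k+1) = k from by ring,
        show (k+1)^2 + (a-1)*(k+1) = k^2 + (a+1)*k + a from by ring]
    calc (∑ᶠ k : ℤ, T (k^2 + (a+1)*k + a) * qbinPlus (M-1) (a + k) * qbinPlus S k)
        = ∑ᶠ k : ℤ, (fun j : ℤ =>
            T (j^2 + (a-1)*j) * qbinPlus (M-1) ((a-1) + j) * qbinPlus S (-1 + j))
            ((Equiv.addRight (1:ℤ)) k) := by
          refine finsum_congr fun k => ?_
          simp only [Equiv.coe_addRight]
          exact (key k).symm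
      _ = _ := finsum_comp_equiv (Equiv.addRight (1:ℤ))
            (f := fun j : ℤ => T (j^2 + (a-1)*j) * qbinPlus (M-1) ((a-1) + j) * qbinPlus S (-1 + j))
  calc (∑ᶠ k : ℤ, T (k ^ 2 + a * k) * qbinPlus M (a + k) * qbinPlus S k)
      = ∑ᶠ k : ℤ, (T (k^2 + (a+1)*k + a) * qbinPlus (M-1) (a + k) * qbinPlus S k
          + T (k^2 + a*k) * qbinPlus (M-1) ((a-1) + k) * qbinPlus S k) := by
        refine finsum_congr fun k => ?_
        rw [qbinPlus_pascal M (a + k), show a + k - 1 = (a-1) + k from by ring,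
          show k^2 + (a+1)*k + a = (k^2 + a*k) + (a + k) from by ring, T_add (k^2 + a*k) (a + k)]
        ring
    _ = (∑ᶠ k : ℤ, T (k^2 + (a+1)*k + a) * qbinPlus (M-1) (a + k) * qbinPlus S k)
        + ∑ᶠ k : ℤ, T (k^2 + a*k) * qbinPlus (M-1) ((a-1) + k) * qbinPlus S k :=
      finsum_add_distrib fG1 fG2
    _ = (∑ᶠ k : ℤ, T (k^2 + a*k) * qbinPlus (M-1) ((a-1) + k) * qbinPlus S k)
        + ∑ᶠ k : ℤ, T (k^2 + (a-1)*k) * qbinPlus (M-1) ((a-1) + k) * qbinPlus S (-1 + k) := by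
      rw [hG1H2, add_comm]
    _ = ∑ᶠ k : ℤ, (T (k^2 + a*k) * qbinPlus (M-1) ((a-1) + k) * qbinPlus S k
        + T (k^2 + (a-1)*k) * qbinPlus (M-1) ((a-1) + k) * qbinPlus S (-1 + k)) :=
      (finsum_add_distrib fG2 fH2).symm
    _ = ∑ᶠ k : ℤ, T (k ^ 2 + (a-1) * k) * qbinPlus (M-1) ((a-1) + k) * qbinPlus (S+1) k := by
      refine finsum_congr fun k => ?_
      rw [qbinPlus_pascal (S+1) k, show S + 1 - 1 = S from by ring,
        show k - 1 = -1 + k from by ring,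
        show k^2 + a*k = (k^2 + (a-1)*k) + k from by ring, T_add (k^2 + (a-1)*k) k]
      ring

lemma base_case (M a : ℤ) :
    (∑ᶠ k : ℤ, T (k ^ 2 + a * k) * qbinPlus M (a + k) * qbinPlus 0 k) = qbinPlus M a := by
  have hz : ∀ x : ℤ, x ≠ 0 →
      T (x ^ 2 + a * x) * qbinPlus M (a + x) * qbinPlus 0 x = 0 := by
    intro k hk
    have h0 : qbinPlus (0:ℤ) k = 0 := by
      simp only [qbinPlus, if_pos (le_refl (0:ℤ)), qbin, gaussZ]
      rw [if_neg (by omega)]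
    rw [h0, mul_zero]
  rw [finsum_eq_single _ 0 hz]
  have h1 : qbinPlus (0:ℤ) 0 = 1 := by
    simp [qbinPlus, qbin, gaussZ, gaussRec]
  norm_num [h1, T_zero]

theorem qbinPlus_knuth' (M S a : ℤ) (h : 0 ≤ M + S) :
    (Function.support (fun k : ℤ =>
        T (k ^ 2 + a * k) * qbinPlus M (a + k) * qbinPlus S k)).Finite ∧
    (∑ᶠ k : ℤ, T (k ^ 2 + a * k) * qbinPlus M (a + k) * qbinPlus S k) =
      qbin (M + S) (S + a) := by
  constructor
  · simpa using fin3 M S a 0 (fun k => T (k ^ 2 + a * k)) (by omega)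
  · suffices H : ∀ S M a : ℤ, 0 ≤ M + S →
        (∑ᶠ k : ℤ, T (k ^ 2 + a * k) * qbinPlus M (a + k) * qbinPlus S k) =
        qbin (M + S) (S + a) from H S M a h
    intro S
    induction S using Int.induction_on with
    | zero =>
      intro M a h0
      rw [base_case]
      simp only [qbinPlus, if_pos (show (0:ℤ) ≤ M by omega)]
      rw [add_zero, zero_add]
    | succ i ih =>
      intro M a h0
      have hs := shift (M+1) (i:ℤ) (a+1) (Or.inl (by positivity))
      simp only [add_sub_cancel_right] at hs
      rw [← hs, ih (M+1) (a+1) (by omega),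
        show (M+1+(i:ℤ)) = M + ((i:ℤ)+1) from by ring,
        show ((i:ℤ)+(a+1)) = ((i:ℤ)+1) + a from by ring]
    | pred i ih =>
      intro M a h0
      have hs := shift M (-(i:ℤ)-1) a (Or.inr (by omega))
      rw [show (-(i:ℤ)-1+1) = -(i:ℤ) from by ring] at hs
      rw [hs, ih (M-1) (a-1) (by omega),
        show (M-1+(-(i:ℤ))) = M + (-(i:ℤ)-1) from by ring,
        show (-(i:ℤ)+(a-1)) = (-(i:ℤ)-1) + a from by ring]

/-- the Knuth-type identity, with ordinary Gaussian binomial on the right. -/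
theorem qbinPlus_knuth (M S a : ℤ) (h : 0 ≤ M + S) :
    (Function.support (fun k : ℤ =>
        T (k ^ 2 + a * k) * qbinPlus M (a + k) * qbinPlus S k)).Finite ∧
    (∑ᶠ k : ℤ, T (k ^ 2 + a * k) * qbinPlus M (a + k) * qbinPlus S k) =
      qbin (M + S) (S + a) :=
  qbinPlus_knuth' M S a h

end
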